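/- arXiv:1104.1742 — 2 statements merged into one kernel-verified Lean document; each statement's English description precedes it below -/
import Mathlib

section
/- For integer K ≥ 2, let Z_K have the density f_K(z) = K·e^{−z}·(1 − e^{−z})^{K−1} on (0,∞) (the maximum of K i.i.d. unit-mean exponential random variables). Then E[Z_K] = ∑_{k=1}^K 1/k, and log(E[Z_K]·E[Z_K⁻¹]) → 0 as K → ∞; that is, the high-SNR capacity gap between the AWGN channel and channel inversion vanishes as the number of users grows. -/
open MeasureTheory Filter Topology Real Set

private lemma u_nonneg {z : ℝ} (hz : 0 ≤ z) : 0 ≤ 1 - Real.exp (-z) := by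
  have : Real.exp (-z) ≤ 1 := Real.exp_le_one_iff.mpr (by linarith)
  linarith

private lemma u_le_one {z : ℝ} : 1 - Real.exp (-z) ≤ 1 := by
  have := Real.exp_pos (-z); linarith

private lemma u_le_z {z : ℝ} : 1 - Real.exp (-z) ≤ z := by
  have := Real.add_one_le_exp (-z); linarith

private lemma hasDerivAt_u (z : ℝ) :
    HasDerivAt (fun z : ℝ => 1 - Real.exp (-z)) (Real.exp (-z)) z := by
  have h : HasDerivAt (fun z : ℝ => Real.exp (-z)) (-Real.exp (-z)) z := by
    simpa [Function.comp_def] using (Real.hasDerivAt_exp (-z)).comp z (hasDerivAt_neg z)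
  simpa using (h.const_sub 1)

private lemma cont_density (n : ℕ) :
    Continuous fun z : ℝ => Real.exp (-z) * (1 - Real.exp (-z)) ^ n := by
  fun_prop

private lemma integrable_density (n : ℕ) :
    IntegrableOn (fun z => Real.exp (-z) * (1 - Real.exp (-z)) ^ n) (Ioi (0:ℝ)) := by
  have hexp : IntegrableOn (fun z : ℝ => Real.exp (-z)) (Ioi (0:ℝ)) := by
    simpa using exp_neg_integrableOn_Ioi (0:ℝ) (b := 1) one_pos
  refine hexp.mono' ((cont_density n).aestronglyMeasurable.restrict) ?_
  filter_upwards [ae_restrict_mem measurableSet_Ioi] with z hz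
  have h0 : (0:ℝ) ≤ 1 - Real.exp (-z) := u_nonneg (le_of_lt hz)
  have h1 : (1 - Real.exp (-z)) ^ n ≤ 1 := pow_le_one₀ h0 u_le_one
  have : (0:ℝ) ≤ (1 - Real.exp (-z)) ^ n := pow_nonneg h0 n
  rw [Real.norm_eq_abs, abs_of_nonneg (by positivity)]
  nlinarith [Real.exp_pos (-z)]

private lemma integrable_z_density (n : ℕ) :
    IntegrableOn (fun z => z * (Real.exp (-z) * (1 - Real.exp (-z)) ^ n)) (Ioi (0:ℝ)) := by
  have hzexp : IntegrableOn (fun z : ℝ => z * Real.exp (-z)) (Ioi (0:ℝ)) := by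
    have h := Real.GammaIntegral_convergent (s := 2) (by norm_num)
    refine h.congr_fun (fun x hx => ?_) measurableSet_Ioi
    rw [show (2:ℝ) - 1 = 1 by norm_num]; simp only [Real.rpow_one]; rw [mul_comm]
  refine hzexp.mono' ((continuous_id.mul (cont_density n)).aestronglyMeasurable.restrict) ?_
  filter_upwards [ae_restrict_mem measurableSet_Ioi] with z hz
  have hz0 : (0:ℝ) < z := hz
  have h0 : (0:ℝ) ≤ 1 - Real.exp (-z) := u_nonneg (le_of_lt hz)
  have h1 : (1 - Real.exp (-z)) ^ n ≤ 1 := pow_le_one₀ h0 u_le_one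
  have h2 : (0:ℝ) ≤ (1 - Real.exp (-z)) ^ n := pow_nonneg h0 n
  have he := Real.exp_pos (-z)
  rw [Real.norm_eq_abs, abs_of_nonneg (by positivity)]
  nlinarith [mul_pos hz0 he, mul_nonneg (mul_nonneg hz0.le he.le) (sub_nonneg.mpr h1)]

private lemma integral_density (n : ℕ) :
    ∫ z in Ioi (0:ℝ), Real.exp (-z) * (1 - Real.exp (-z)) ^ n = 1 / (n + 1) := by
  have hderiv : ∀ x ∈ Ici (0:ℝ),
      HasDerivAt (fun z => (1 - Real.exp (-z)) ^ (n+1) / (n+1))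
        (Real.exp (-x) * (1 - Real.exp (-x)) ^ n) x := by
    intro x _
    have h := ((hasDerivAt_u x).pow (n+1)).div_const ((n:ℝ)+1)
    refine h.congr_deriv ?_
    push_cast
    field_simp
  have hl : Tendsto (fun z => (1 - Real.exp (-z)) ^ (n+1) / ((n:ℝ)+1)) atTop
      (𝓝 (1 / ((n:ℝ)+1))) := by
    have : Tendsto (fun z : ℝ => 1 - Real.exp (-z)) atTop (𝓝 1) := by
      have := Real.tendsto_exp_neg_atTop_nhds_zero
      simpa using (tendsto_const_nhds (x := (1:ℝ))).sub this
    have := (this.pow (n+1)).div_const ((n:ℝ)+1)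
    simpa using this
  have := integral_Ioi_of_hasDerivAt_of_tendsto' hderiv (integrable_density n) hl
  rw [this]
  simp [Real.exp_zero]
-- appended to s1
private lemma integral_z_exp : ∫ z in Ioi (0:ℝ), z * Real.exp (-z) = 1 := by
  have hderiv : ∀ x ∈ Ici (0:ℝ),
      HasDerivAt (fun z => -(z+1) * Real.exp (-z)) (x * Real.exp (-x)) x := by
    intro x _
    have h1 : HasDerivAt (fun z : ℝ => Real.exp (-z)) (-Real.exp (-x)) x := by
      simpa [Function.comp_def] using (Real.hasDerivAt_exp (-x)).comp x (hasDerivAt_neg x)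
    have h2 : HasDerivAt (fun z : ℝ => -(z+1)) (-1) x := by
      exact ((hasDerivAt_id x).add_const 1).neg
    have := h2.mul h1
    refine this.congr_deriv ?_
    ring
  have hint : IntegrableOn (fun z : ℝ => z * Real.exp (-z)) (Ioi (0:ℝ)) := by
    have := integrable_z_density 0
    simpa using this
  have hl : Tendsto (fun z : ℝ => -(z+1) * Real.exp (-z)) atTop (𝓝 0) := by
    have h : Tendsto (fun z : ℝ => z * Real.exp (-z)) atTop (𝓝 0) := by
      simpa [pow_one] using tendsto_pow_mul_exp_neg_atTop_nhds_zero 1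
    have h2 := (h.add Real.tendsto_exp_neg_atTop_nhds_zero).neg
    simp only [add_zero, neg_zero] at h2
    exact h2.congr (fun z => by ring)
  have := integral_Ioi_of_hasDerivAt_of_tendsto' hderiv hint hl
  rw [this]; simp [Real.exp_zero]

private lemma expectation_eq (n : ℕ) (hn : 1 ≤ n) :
    ∫ z in Ioi (0:ℝ), z * ((n:ℝ) * Real.exp (-z) * (1 - Real.exp (-z)) ^ (n - 1)) =
      ∑ k ∈ Finset.Icc 1 n, (1:ℝ) / k := by
  induction n, hn using Nat.le_induction with
  | base =>
    simp only [Nat.sub_self, pow_zero, Nat.cast_one, one_mul, mul_one]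
    rw [integral_z_exp]
    simp
  | succ n hn ih =>
    obtain ⟨m, rfl⟩ : ∃ m, n = m + 1 := ⟨n-1, (Nat.succ_pred_eq_of_pos hn).symm⟩
    -- goal exponent: (m+1+1)-1 = m+1 ; ih exponent: (m+1)-1 = m
    simp only [Nat.add_sub_cancel] at ih ⊢
    -- key step : I(m+2) = I(m+1) + 1/(m+2)
    set u : ℝ → ℝ := fun z => 1 - Real.exp (-z) with hu
    have hg : ∀ x ∈ Ici (0:ℝ),
        HasDerivAt (fun z => z * ((u z) ^ (m+2) - (u z) ^ (m+1)))
          (((u x) ^ (m+2) - (u x) ^ (m+1)) +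
            x * (Real.exp (-x) * (((m:ℝ)+2) * (u x) ^ (m+1) - ((m:ℝ)+1) * (u x) ^ m))) x := by
      intro x _
      have h1 : HasDerivAt (fun z => (u z) ^ (m+2) - (u z) ^ (m+1))
          (Real.exp (-x) * (((m:ℝ)+2) * (u x) ^ (m+1) - ((m:ℝ)+1) * (u x) ^ m)) x := by
        have hp1 := (hasDerivAt_u x).pow (m+2)
        have hp2 := (hasDerivAt_u x).pow (m+1)
        have := hp1.sub hp2
        refine this.congr_deriv ?_
        simp only [Nat.add_sub_cancel]
        push_cast
        ring
      have := (hasDerivAt_id x).mul h1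
      refine this.congr_deriv ?_
      simp only [id_eq]
      ring
    have hh_int : IntegrableOn (fun z => (u z) ^ (m+2) - (u z) ^ (m+1)) (Ioi (0:ℝ)) := by
      have h : IntegrableOn (fun z => -(Real.exp (-z) * (1 - Real.exp (-z)) ^ (m+1))) (Ioi (0:ℝ)) :=
        (integrable_density (m+1)).neg
      refine h.congr_fun (fun x hx => ?_) measurableSet_Ioi
      simp only [hu]
      ring
    have hz1 : IntegrableOn (fun z => z * (Real.exp (-z) * (u z) ^ (m+1))) (Ioi (0:ℝ)) :=
      integrable_z_density (m+1)
    have hz0 : IntegrableOn (fun z => z * (Real.exp (-z) * (u z) ^ m)) (Ioi (0:ℝ)) :=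
      integrable_z_density m
    have hzterm : IntegrableOn
        (fun z => z * (Real.exp (-z) * (((m:ℝ)+2) * (u z) ^ (m+1) - ((m:ℝ)+1) * (u z) ^ m)))
        (Ioi (0:ℝ)) := by
      have h : IntegrableOn (fun z => ((m:ℝ)+2) * (z * (Real.exp (-z) * (u z) ^ (m+1))) -
          ((m:ℝ)+1) * (z * (Real.exp (-z) * (u z) ^ m))) (Ioi (0:ℝ)) :=
        (hz1.const_mul ((m:ℝ)+2)).sub (hz0.const_mul ((m:ℝ)+1))
      refine h.congr_fun (fun x hx => ?_) measurableSet_Ioi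
      ring
    have hg'_int : IntegrableOn
        (fun z => ((u z) ^ (m+2) - (u z) ^ (m+1)) +
          z * (Real.exp (-z) * (((m:ℝ)+2) * (u z) ^ (m+1) - ((m:ℝ)+1) * (u z) ^ m)))
        (Ioi (0:ℝ)) := hh_int.add hzterm
    have hgl : Tendsto (fun z => z * ((u z) ^ (m+2) - (u z) ^ (m+1))) atTop (𝓝 0) := by
      -- |z * (u^{m+2}-u^{m+1})| = z * u^{m+1} * e^{-z} ≤ z e^{-z} → 0
      have hb : Tendsto (fun z : ℝ => z * Real.exp (-z)) atTop (𝓝 0) := by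
        simpa [pow_one] using tendsto_pow_mul_exp_neg_atTop_nhds_zero 1
      have hnb : Tendsto (fun z : ℝ => -(z * Real.exp (-z))) atTop (𝓝 0) := by
        simpa using hb.neg
      refine tendsto_of_tendsto_of_tendsto_of_le_of_le' hnb hb ?_ ?_
      · filter_upwards [eventually_ge_atTop (0:ℝ)] with z hz
        have h0 : (0:ℝ) ≤ u z := u_nonneg hz
        have h1 : (u z) ^ (m+1) ≤ 1 := pow_le_one₀ h0 u_le_one
        have he := Real.exp_pos (-z)
        have huz : (u z) ^ (m+2) - (u z) ^ (m+1) = -((u z)^(m+1) * Real.exp (-z)) := by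
          simp only [hu]; ring
        rw [huz]
        have : (u z)^(m+1) * Real.exp (-z) ≤ Real.exp (-z) := by
          nlinarith [pow_nonneg h0 (m+1)]
        nlinarith [mul_nonneg hz (mul_nonneg (pow_nonneg h0 (m+1)) he.le)]
      · filter_upwards [eventually_ge_atTop (0:ℝ)] with z hz
        have h0 : (0:ℝ) ≤ u z := u_nonneg hz
        have he := Real.exp_pos (-z)
        have huz : (u z) ^ (m+2) - (u z) ^ (m+1) = -((u z)^(m+1) * Real.exp (-z)) := by
          simp only [hu]; ring
        rw [huz]
        nlinarith [mul_nonneg hz (mul_nonneg (pow_nonneg h0 (m+1)) he.le)]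
    have hFTC := integral_Ioi_of_hasDerivAt_of_tendsto' hg hg'_int hgl
    simp only [hu] at hFTC
    rw [show ((0:ℝ) * ((1 - Real.exp (-(0:ℝ))) ^ (m+2) - (1 - Real.exp (-(0:ℝ))) ^ (m+1))) = 0 by simp] at hFTC
    rw [sub_zero] at hFTC
    -- split the integral
    rw [integral_add hh_int hzterm] at hFTC
    have hIH : ∫ z in Ioi (0:ℝ), (u z) ^ (m+2) - (u z) ^ (m+1) = -(1/((m:ℝ)+2)) := by
      have h := integral_density (m+1)
      have : ∫ z in Ioi (0:ℝ), (u z) ^ (m+2) - (u z) ^ (m+1) =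
          ∫ z in Ioi (0:ℝ), -(Real.exp (-z) * (1 - Real.exp (-z)) ^ (m+1)) := by
        refine setIntegral_congr_fun measurableSet_Ioi (fun x hx => ?_)
        simp only [hu]; ring
      rw [this, integral_neg, h]
      push_cast; ring_nf
    rw [hIH] at hFTC
    have hsplit : ∫ z in Ioi (0:ℝ),
        z * (Real.exp (-z) * (((m:ℝ)+2) * (u z) ^ (m+1) - ((m:ℝ)+1) * (u z) ^ m)) =
        (((m:ℝ)+2) * ∫ z in Ioi (0:ℝ), z * (Real.exp (-z) * (u z) ^ (m+1))) -
        (((m:ℝ)+1) * ∫ z in Ioi (0:ℝ), z * (Real.exp (-z) * (u z) ^ m)) := by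
      rw [← integral_const_mul, ← integral_const_mul, ← integral_sub (hz1.const_mul _) (hz0.const_mul _)]
      refine setIntegral_congr_fun measurableSet_Ioi (fun x hx => ?_)
      ring
    rw [hsplit] at hFTC
    -- express goal and ih integrals in this normal form
    have hgoal : ∫ z in Ioi (0:ℝ),
        z * ((((m:ℕ)+1+1 : ℕ):ℝ) * Real.exp (-z) * (1 - Real.exp (-z)) ^ (m+1)) =
        ((m:ℝ)+2) * ∫ z in Ioi (0:ℝ), z * (Real.exp (-z) * (u z) ^ (m+1)) := by
      rw [← integral_const_mul]
      refine setIntegral_congr_fun measurableSet_Ioi (fun x hx => ?_)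
      simp only [hu]; push_cast; ring
    have hih' : ∫ z in Ioi (0:ℝ),
        z * ((((m:ℕ)+1 : ℕ):ℝ) * Real.exp (-z) * (1 - Real.exp (-z)) ^ m) =
        ((m:ℝ)+1) * ∫ z in Ioi (0:ℝ), z * (Real.exp (-z) * (u z) ^ m) := by
      rw [← integral_const_mul]
      refine setIntegral_congr_fun measurableSet_Ioi (fun x hx => ?_)
      simp only [hu]; push_cast; ring
    rw [hgoal]
    rw [hih'] at ih
    rw [ih] at hFTC
    rw [Finset.sum_Icc_succ_top (by omega : 1 ≤ m + 1 + 1)]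
    push_cast
    ring_nf
    ring_nf at hFTC
    linarith [hFTC]
private lemma cast_sub_one {K : ℕ} (hK : 1 ≤ K) : ((K - 1 : ℕ) : ℝ) + 1 = K := by
  have := Nat.sub_add_cancel hK
  exact_mod_cast congrArg (Nat.cast : ℕ → ℝ) this

private lemma integrable_f (K : ℕ) :
    IntegrableOn (fun z => (K:ℝ) * Real.exp (-z) * (1 - Real.exp (-z)) ^ (K-1)) (Ioi (0:ℝ)) := by
  have h : IntegrableOn (fun z => (K:ℝ) * (Real.exp (-z) * (1 - Real.exp (-z)) ^ (K-1)))
      (Ioi (0:ℝ)) := (integrable_density (K-1)).const_mul _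
  exact h.congr_fun (fun x hx => by ring) measurableSet_Ioi

private lemma integral_f (K : ℕ) (hK : 1 ≤ K) :
    ∫ z in Ioi (0:ℝ), (K:ℝ) * Real.exp (-z) * (1 - Real.exp (-z)) ^ (K-1) = 1 := by
  have h1 : ∫ z in Ioi (0:ℝ), (K:ℝ) * Real.exp (-z) * (1 - Real.exp (-z)) ^ (K-1) =
      (K:ℝ) * ∫ z in Ioi (0:ℝ), Real.exp (-z) * (1 - Real.exp (-z)) ^ (K-1) := by
    rw [← integral_const_mul]
    exact setIntegral_congr_fun measurableSet_Ioi (fun x hx => by ring)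
  have hKpos : (0:ℝ) < K := by exact_mod_cast (by omega : 0 < K)
  rw [h1, integral_density (K-1), cast_sub_one hK]
  field_simp

private lemma integrable_inv_f (K : ℕ) (hK : 2 ≤ K) :
    IntegrableOn (fun z => z⁻¹ * ((K:ℝ) * Real.exp (-z) * (1 - Real.exp (-z)) ^ (K-1)))
      (Ioi (0:ℝ)) := by
  have he1 : IntegrableOn (fun z : ℝ => Real.exp (-z)) (Ioi (0:ℝ)) := by
    simpa using exp_neg_integrableOn_Ioi (0:ℝ) (b := 1) one_pos
  have hexp : IntegrableOn (fun z : ℝ => (K:ℝ) * Real.exp (-z)) (Ioi (0:ℝ)) :=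
    he1.const_mul _
  have hmeas : AEStronglyMeasurable
      (fun z => z⁻¹ * ((K:ℝ) * Real.exp (-z) * (1 - Real.exp (-z)) ^ (K-1)))
      (volume.restrict (Ioi (0:ℝ))) :=
    Measurable.aestronglyMeasurable (by fun_prop)
  refine hexp.mono' hmeas ?_
  filter_upwards [ae_restrict_mem measurableSet_Ioi] with z hz
  have hz0 : (0:ℝ) < z := hz
  have h0 : (0:ℝ) ≤ 1 - Real.exp (-z) := u_nonneg hz0.le
  have he := Real.exp_pos (-z)
  have hK1 : K - 1 = (K - 2) + 1 := by omega
  have h2 : (1 - Real.exp (-z)) ^ (K-2) ≤ 1 := pow_le_one₀ h0 u_le_one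
  have h3 : (1 - Real.exp (-z)) * z⁻¹ ≤ 1 := by
    rw [← div_eq_mul_inv, div_le_one hz0]; exact u_le_z
  rw [Real.norm_eq_abs, abs_of_nonneg (by positivity)]
  have key : z⁻¹ * ((K:ℝ) * Real.exp (-z) * (1 - Real.exp (-z)) ^ (K-1)) =
      ((K:ℝ) * Real.exp (-z)) * ((1 - Real.exp (-z)) ^ (K-2) *
        ((1 - Real.exp (-z)) * z⁻¹)) := by
    rw [hK1]; ring
  rw [key]
  have hKe : (0:ℝ) ≤ (K:ℝ) * Real.exp (-z) := by positivity
  have hle : (1 - Real.exp (-z)) ^ (K-2) * ((1 - Real.exp (-z)) * z⁻¹) ≤ 1 :=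
    mul_le_one₀ h2 (mul_nonneg h0 (inv_nonneg.mpr hz0.le)) h3
  nlinarith [mul_nonneg (pow_nonneg h0 (K-2)) (mul_nonneg h0 (inv_nonneg.mpr hz0.le))]

private lemma cdf_Ioc (K : ℕ) (hK : 1 ≤ K) {b : ℝ} (hb : 0 ≤ b) :
    ∫ z in Ioc (0:ℝ) b, (K:ℝ) * Real.exp (-z) * (1 - Real.exp (-z)) ^ (K-1) =
      (1 - Real.exp (-b)) ^ K := by
  have hderiv : ∀ x ∈ uIcc (0:ℝ) b,
      HasDerivAt (fun z => (1 - Real.exp (-z)) ^ K)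
        ((K:ℝ) * Real.exp (-x) * (1 - Real.exp (-x)) ^ (K-1)) x := by
    intro x _
    have := (hasDerivAt_u x).pow K
    refine this.congr_deriv ?_
    ring
  have hint : IntervalIntegrable
      (fun z => (K:ℝ) * Real.exp (-z) * (1 - Real.exp (-z)) ^ (K-1)) volume 0 b :=
    (by fun_prop : Continuous fun z : ℝ => (K:ℝ) * Real.exp (-z) *
      (1 - Real.exp (-z)) ^ (K-1)).intervalIntegrable 0 b
  have h := intervalIntegral.integral_eq_sub_of_hasDerivAt hderiv hint
  rw [intervalIntegral.integral_of_le hb] at h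
  rw [h]
  simp [Real.exp_zero, zero_pow (by omega : K ≠ 0)]

private lemma B_nonneg (K : ℕ) :
    0 ≤ ∫ z in Ioi (0:ℝ), z⁻¹ * ((K:ℝ) * Real.exp (-z) * (1 - Real.exp (-z)) ^ (K-1)) := by
  refine setIntegral_nonneg measurableSet_Ioi (fun z hz => ?_)
  have hz0 : (0:ℝ) < z := hz
  have h0 : (0:ℝ) ≤ 1 - Real.exp (-z) := u_nonneg hz0.le
  positivity

private lemma B_lower (K : ℕ) (hK : 2 ≤ K) {b : ℝ} (hb : 0 < b) :
    b⁻¹ * (1 - Real.exp (-b)) ^ K ≤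
      ∫ z in Ioi (0:ℝ), z⁻¹ * ((K:ℝ) * Real.exp (-z) * (1 - Real.exp (-z)) ^ (K-1)) := by
  have hsub : Ioc (0:ℝ) b ⊆ Ioi 0 := Ioc_subset_Ioi_self
  have hint := integrable_inv_f K hK
  have hf := integrable_f K
  have step1 : ∫ z in Ioc (0:ℝ) b, z⁻¹ * ((K:ℝ) * Real.exp (-z) * (1 - Real.exp (-z)) ^ (K-1))
      ≤ ∫ z in Ioi (0:ℝ), z⁻¹ * ((K:ℝ) * Real.exp (-z) * (1 - Real.exp (-z)) ^ (K-1)) := by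
    refine setIntegral_mono_set hint ?_ (HasSubset.Subset.eventuallyLE hsub)
    filter_upwards [ae_restrict_mem measurableSet_Ioi] with z hz
    have hz0 : (0:ℝ) < z := hz
    have h0 : (0:ℝ) ≤ 1 - Real.exp (-z) := u_nonneg hz0.le
    positivity
  have step2 : ∫ z in Ioc (0:ℝ) b, b⁻¹ * ((K:ℝ) * Real.exp (-z) * (1 - Real.exp (-z)) ^ (K-1))
      ≤ ∫ z in Ioc (0:ℝ) b, z⁻¹ * ((K:ℝ) * Real.exp (-z) * (1 - Real.exp (-z)) ^ (K-1)) := by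
    refine setIntegral_mono_on ((hf.mono_set hsub).const_mul _) (hint.mono_set hsub)
      measurableSet_Ioc (fun z hz => ?_)
    have hz0 : (0:ℝ) < z := hz.1
    have h0 : (0:ℝ) ≤ 1 - Real.exp (-z) := u_nonneg hz0.le
    have hinv : b⁻¹ ≤ z⁻¹ := by
      apply inv_anti₀ hz0 hz.2
    exact mul_le_mul_of_nonneg_right hinv (by positivity)
  have step3 : ∫ z in Ioc (0:ℝ) b, b⁻¹ * ((K:ℝ) * Real.exp (-z) * (1 - Real.exp (-z)) ^ (K-1))
      = b⁻¹ * (1 - Real.exp (-b)) ^ K := by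
    rw [integral_const_mul, cdf_Ioc K (by omega) hb.le]
  linarith [step1, step2, step3.symm.le, step3.le]

private lemma B_upper (K : ℕ) (hK : 2 ≤ K) {a : ℝ} (ha : 0 < a) :
    ∫ z in Ioi (0:ℝ), z⁻¹ * ((K:ℝ) * Real.exp (-z) * (1 - Real.exp (-z)) ^ (K-1))
      ≤ a⁻¹ + (K:ℝ) * (1 - Real.exp (-a)) ^ (K-2) * a := by
  have hint := integrable_inv_f K hK
  have hf := integrable_f K
  have hunion : Ioc (0:ℝ) a ∪ Ioi a = Ioi 0 := Ioc_union_Ioi_eq_Ioi ha.le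
  have hIoc : Ioc (0:ℝ) a ⊆ Ioi 0 := Ioc_subset_Ioi_self
  have hIoi : Ioi a ⊆ Ioi (0:ℝ) := Ioi_subset_Ioi ha.le
  have hsplit : ∫ z in Ioi (0:ℝ), z⁻¹ * ((K:ℝ) * Real.exp (-z) * (1 - Real.exp (-z)) ^ (K-1))
      = (∫ z in Ioc (0:ℝ) a, z⁻¹ * ((K:ℝ) * Real.exp (-z) * (1 - Real.exp (-z)) ^ (K-1)))
        + ∫ z in Ioi a, z⁻¹ * ((K:ℝ) * Real.exp (-z) * (1 - Real.exp (-z)) ^ (K-1)) := by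
    rw [← hunion]
    exact setIntegral_union (Ioc_disjoint_Ioi le_rfl) measurableSet_Ioi
      (hint.mono_set hIoc) (hint.mono_set hIoi)
  rw [hsplit]
  have piece1 : ∫ z in Ioc (0:ℝ) a, z⁻¹ * ((K:ℝ) * Real.exp (-z) * (1 - Real.exp (-z)) ^ (K-1))
      ≤ (K:ℝ) * (1 - Real.exp (-a)) ^ (K-2) * a := by
    have hmono : ∫ z in Ioc (0:ℝ) a,
        z⁻¹ * ((K:ℝ) * Real.exp (-z) * (1 - Real.exp (-z)) ^ (K-1))
        ≤ ∫ _z in Ioc (0:ℝ) a, (K:ℝ) * (1 - Real.exp (-a)) ^ (K-2) := by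
      refine setIntegral_mono_on (hint.mono_set hIoc) (integrableOn_const ?_)
        measurableSet_Ioc (fun z hz => ?_)
      · rw [Real.volume_Ioc]; exact ENNReal.ofReal_ne_top
      · have hz0 : (0:ℝ) < z := hz.1
        have h0 : (0:ℝ) ≤ 1 - Real.exp (-z) := u_nonneg hz0.le
        have ha0 : (0:ℝ) ≤ 1 - Real.exp (-a) := u_nonneg ha.le
        have hK1 : K - 1 = (K - 2) + 1 := by omega
        have key : z⁻¹ * ((K:ℝ) * Real.exp (-z) * (1 - Real.exp (-z)) ^ (K-1)) =
            (K:ℝ) * (Real.exp (-z) * ((1 - Real.exp (-z)) ^ (K-2) *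
              ((1 - Real.exp (-z)) * z⁻¹))) := by
          rw [hK1]; ring
        rw [key]
        have h1 : Real.exp (-z) ≤ 1 := Real.exp_le_one_iff.mpr (by linarith)
        have h2 : (1 - Real.exp (-z)) ^ (K-2) ≤ (1 - Real.exp (-a)) ^ (K-2) := by
          apply pow_le_pow_left₀ h0
          have : Real.exp (-a) ≤ Real.exp (-z) := Real.exp_le_exp.mpr (by linarith [hz.2])
          linarith
        have h3 : (1 - Real.exp (-z)) * z⁻¹ ≤ 1 := by
          rw [← div_eq_mul_inv, div_le_one hz0]; exact u_le_z
        have he := (Real.exp_pos (-z)).le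
        have hKn : (0:ℝ) ≤ K := Nat.cast_nonneg K
        refine mul_le_mul_of_nonneg_left ?_ hKn
        calc Real.exp (-z) * ((1 - Real.exp (-z)) ^ (K-2) * ((1 - Real.exp (-z)) * z⁻¹))
            ≤ 1 * ((1 - Real.exp (-a)) ^ (K-2) * 1) := by
              refine mul_le_mul h1 ?_ ?_ zero_le_one
              · exact mul_le_mul h2 h3 (mul_nonneg h0 (inv_nonneg.mpr hz0.le))
                  (pow_nonneg ha0 _)
              · positivity
          _ = (1 - Real.exp (-a)) ^ (K-2) := by ring
    have hconst : ∫ _z in Ioc (0:ℝ) a, (K:ℝ) * (1 - Real.exp (-a)) ^ (K-2)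
        = (K:ℝ) * (1 - Real.exp (-a)) ^ (K-2) * a := by
      rw [setIntegral_const, Real.volume_real_Ioc, smul_eq_mul]
      rw [max_eq_left (by linarith)]
      ring
    linarith [hmono, hconst.le]
  have piece2 : ∫ z in Ioi a, z⁻¹ * ((K:ℝ) * Real.exp (-z) * (1 - Real.exp (-z)) ^ (K-1))
      ≤ a⁻¹ := by
    have hmono : ∫ z in Ioi a, z⁻¹ * ((K:ℝ) * Real.exp (-z) * (1 - Real.exp (-z)) ^ (K-1))
        ≤ ∫ z in Ioi a, a⁻¹ * ((K:ℝ) * Real.exp (-z) * (1 - Real.exp (-z)) ^ (K-1)) := by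
      refine setIntegral_mono_on (hint.mono_set hIoi) ((hf.mono_set hIoi).const_mul _)
        measurableSet_Ioi (fun z hz => ?_)
      have hz0 : (0:ℝ) < z := lt_trans ha hz
      have h0 : (0:ℝ) ≤ 1 - Real.exp (-z) := u_nonneg hz0.le
      have hinv : z⁻¹ ≤ a⁻¹ := inv_anti₀ ha (le_of_lt hz)
      exact mul_le_mul_of_nonneg_right hinv (by positivity)
    have htot : ∫ z in Ioi a, a⁻¹ * ((K:ℝ) * Real.exp (-z) * (1 - Real.exp (-z)) ^ (K-1))
        ≤ a⁻¹ := by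
      rw [integral_const_mul]
      have hmono2 : ∫ z in Ioi a, (K:ℝ) * Real.exp (-z) * (1 - Real.exp (-z)) ^ (K-1)
          ≤ ∫ z in Ioi (0:ℝ), (K:ℝ) * Real.exp (-z) * (1 - Real.exp (-z)) ^ (K-1) := by
        refine setIntegral_mono_set hf ?_ (HasSubset.Subset.eventuallyLE hIoi)
        filter_upwards [ae_restrict_mem measurableSet_Ioi] with z hz
        have hz0 : (0:ℝ) < z := hz
        have h0 : (0:ℝ) ≤ 1 - Real.exp (-z) := u_nonneg hz0.le
        positivity
      rw [integral_f K (by omega)] at hmono2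
      calc a⁻¹ * ∫ z in Ioi a, (K:ℝ) * Real.exp (-z) * (1 - Real.exp (-z)) ^ (K-1)
          ≤ a⁻¹ * 1 := mul_le_mul_of_nonneg_left hmono2 (inv_nonneg.mpr ha.le)
        _ = a⁻¹ := mul_one _
    linarith
  linarith
private lemma tendsto_logN : Tendsto (fun K : ℕ => Real.log K) atTop atTop :=
  Real.tendsto_log_atTop.comp tendsto_natCast_atTop_atTop

private lemma tendsto_phi :
    Tendsto (fun x : ℝ => (1 + x) * x * Real.exp (x - x^2/2)) atTop (𝓝 0) := by
  have hx : Tendsto (fun x : ℝ => x * Real.exp (-x)) atTop (𝓝 0) := by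
    simpa [pow_one] using tendsto_pow_mul_exp_neg_atTop_nhds_zero 1
  have h1x : Tendsto (fun x : ℝ => (1 + x) * Real.exp (-x)) atTop (𝓝 0) := by
    have h := Real.tendsto_exp_neg_atTop_nhds_zero.add hx
    simp only [add_zero] at h
    exact h.congr (fun x => by ring)
  have hprod : Tendsto (fun x : ℝ => ((1 + x) * Real.exp (-x)) * (x * Real.exp (-x)))
      atTop (𝓝 0) := by simpa using h1x.mul hx
  refine tendsto_of_tendsto_of_tendsto_of_le_of_le' tendsto_const_nhds hprod ?_ ?_
  · filter_upwards [eventually_ge_atTop (0:ℝ)] with x hx0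
    have := (Real.exp_pos (x - x^2/2)).le
    positivity
  · filter_upwards [eventually_ge_atTop (6:ℝ)] with x hx6
    have hb : Real.exp (x - x^2/2) ≤ Real.exp (-x) * Real.exp (-x) := by
      rw [← Real.exp_add]
      apply Real.exp_le_exp.mpr
      nlinarith
    calc (1 + x) * x * Real.exp (x - x^2/2)
        ≤ (1 + x) * x * (Real.exp (-x) * Real.exp (-x)) :=
          mul_le_mul_of_nonneg_left hb (by nlinarith)
      _ = ((1 + x) * Real.exp (-x)) * (x * Real.exp (-x)) := by ring

private lemma harmonic_cast (K : ℕ) :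
    ((harmonic K : ℚ) : ℝ) = ∑ k ∈ Finset.Icc 1 K, (1:ℝ) / k := by
  rw [harmonic_eq_sum_Icc]
  push_cast
  simp [one_div]

/-- **AWGN–CI gap vanishes with multi-user diversity.** For integer `K ≥ 2`, let `Z_K` have
the density `f_K(z) = K·e^{−z}·(1 − e^{−z})^{K−1}` on `(0,∞)` (the maximum of `K` i.i.d.
unit-mean exponentials). Then `E[Z_K] = ∑_{k=1}^K 1/k`, and the high-SNR gap
`log(E[Z_K]·E[Z_K⁻¹])` between the AWGN channel and channel inversion tends to `0` as
`K → ∞`. -/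
theorem awgn_ci_gap_multiuser :
    (∀ K : ℕ, 2 ≤ K →
      ∫ z in Set.Ioi (0:ℝ),
          z * ((K : ℝ) * Real.exp (-z) * (1 - Real.exp (-z)) ^ (K - 1)) =
        ∑ k ∈ Finset.Icc 1 K, (1:ℝ) / k) ∧
    Tendsto (fun K : ℕ =>
        Real.log ((∫ z in Set.Ioi (0:ℝ),
            z * ((K : ℝ) * Real.exp (-z) * (1 - Real.exp (-z)) ^ (K - 1))) *
          (∫ z in Set.Ioi (0:ℝ),
            z⁻¹ * ((K : ℝ) * Real.exp (-z) * (1 - Real.exp (-z)) ^ (K - 1)))))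
      atTop (𝓝 0) := by
  constructor
  · intro K hK
    exact expectation_eq K (by omega)
  · set P : ℕ → ℝ := fun K =>
      (∫ z in Set.Ioi (0:ℝ), z * ((K : ℝ) * Real.exp (-z) * (1 - Real.exp (-z)) ^ (K - 1))) *
      (∫ z in Set.Ioi (0:ℝ), z⁻¹ * ((K : ℝ) * Real.exp (-z) * (1 - Real.exp (-z)) ^ (K - 1)))
      with hP_def
    show Tendsto (fun K : ℕ => Real.log (P K)) atTop (𝓝 0)
    have hML : Tendsto (fun K : ℕ => Real.log (Real.log K) / Real.log K) atTop (𝓝 0) := by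
      have h := Real.isLittleO_log_id_atTop.tendsto_div_nhds_zero
      have := h.comp tendsto_logN
      simpa [Function.comp_def] using this
    have hinvL : Tendsto (fun K : ℕ => (Real.log K)⁻¹) atTop (𝓝 0) :=
      tendsto_logN.inv_tendsto_atTop
    set lo : ℕ → ℝ := fun K =>
      (Real.log K - 1) / (Real.log K + Real.log (Real.log K)) with hlo_def
    set up : ℕ → ℝ := fun K =>
      (1 + Real.log K) * (Real.log K - 2 * Real.log (Real.log K))⁻¹ +
      (1 + Real.log K) * Real.log K * Real.exp (Real.log K - (Real.log K)^2/2) with hup_def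
    have hlo_lim : Tendsto lo atTop (𝓝 1) := by
      have h1 : Tendsto (fun K : ℕ =>
          (1 - (Real.log K)⁻¹) / (1 + Real.log (Real.log K) / Real.log K)) atTop (𝓝 1) := by
        have := (((tendsto_const_nhds (x := (1:ℝ))).sub hinvL).div
          ((tendsto_const_nhds (x := (1:ℝ))).add hML) (by norm_num))
        simpa [Pi.div_def] using this
      refine h1.congr' ?_
      filter_upwards [tendsto_logN.eventually_ge_atTop 5] with K hL5
      have hM0 : 0 ≤ Real.log (Real.log K) := Real.log_nonneg (by linarith)
      have hL : Real.log (K:ℝ) ≠ 0 := by linarith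
      have hLM : Real.log (K:ℝ) + Real.log (Real.log K) ≠ 0 := by positivity
      simp only [hlo_def]
      field_simp
    have hup_lim : Tendsto up atTop (𝓝 1) := by
      have h1 : Tendsto (fun K : ℕ =>
          ((Real.log K)⁻¹ + 1) / (1 - 2 * (Real.log (Real.log K) / Real.log K)))
          atTop (𝓝 1) := by
        have := ((hinvL.add (tendsto_const_nhds (x := (1:ℝ)))).div
          (((tendsto_const_nhds (x := (1:ℝ)))).sub (hML.const_mul 2)) (by norm_num))
        simpa [Pi.div_def] using this
      have h2 : Tendsto (fun K : ℕ =>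
          (1 + Real.log K) * Real.log K * Real.exp (Real.log K - (Real.log K)^2/2))
          atTop (𝓝 0) := by
        have := tendsto_phi.comp tendsto_logN
        simpa [Function.comp_def] using this
      have h1' : Tendsto (fun K : ℕ =>
          (1 + Real.log K) * (Real.log K - 2 * Real.log (Real.log K))⁻¹) atTop (𝓝 1) := by
        refine h1.congr' ?_
        filter_upwards [tendsto_logN.eventually_ge_atTop 5] with K hL5
        have hM0 : 0 ≤ Real.log (Real.log K) := Real.log_nonneg (by linarith)
        have h2M : 2 * Real.log (Real.log (K:ℝ)) < Real.log (K:ℝ) := by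
          have hhalf : (0:ℝ) < Real.log (K:ℝ) / 2 := by linarith
          have hlog := Real.log_le_sub_one_of_pos hhalf
          have hsplit : Real.log (Real.log (K:ℝ)) =
              Real.log 2 + Real.log (Real.log (K:ℝ) / 2) := by
            rw [← Real.log_mul (by norm_num) (by linarith)]
            ring_nf
          have hlog2 := Real.log_two_lt_d9
          rw [hsplit]
          linarith
        have hL : Real.log (K:ℝ) ≠ 0 := by linarith
        have hden : Real.log (K:ℝ) - 2 * Real.log (Real.log (K:ℝ)) ≠ 0 := by linarith
        field_simp
      have := h1'.add h2
      simpa [hup_def] using this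
    have hbound : ∀ᶠ K : ℕ in atTop, lo K ≤ P K ∧ P K ≤ up K := by
      filter_upwards [eventually_ge_atTop 4, tendsto_logN.eventually_ge_atTop 5] with K hK4 hL5
      have hK2 : 2 ≤ K := by omega
      have hKpos : (0:ℝ) < K := by exact_mod_cast (by omega : 0 < K)
      set L := Real.log (K:ℝ) with hLdef
      set M := Real.log L with hMdef
      have hM0 : 0 ≤ M := Real.log_nonneg (by linarith)
      have h2M : 2 * M < L := by
        have hhalf : (0:ℝ) < L / 2 := by linarith
        have hlog := Real.log_le_sub_one_of_pos hhalf
        have hsplit : M = Real.log 2 + Real.log (L / 2) := by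
          rw [hMdef, ← Real.log_mul (by norm_num) (by linarith)]
          ring_nf
        have hlog2 := Real.log_two_lt_d9
        rw [hsplit]
        linarith
      have ha : (0:ℝ) < L - 2 * M := by linarith
      have hb : (0:ℝ) < L + M := by linarith
      have hexpL : Real.exp L = K := Real.exp_log hKpos
      have hexpM : Real.exp M = L := Real.exp_log (by linarith)
      have hA_eq : (∫ z in Set.Ioi (0:ℝ),
          z * ((K : ℝ) * Real.exp (-z) * (1 - Real.exp (-z)) ^ (K - 1)))
          = ((harmonic K : ℚ) : ℝ) := by
        rw [expectation_eq K (by omega), harmonic_cast]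
      have hA_low : L ≤ (∫ z in Set.Ioi (0:ℝ),
          z * ((K : ℝ) * Real.exp (-z) * (1 - Real.exp (-z)) ^ (K - 1))) := by
        rw [hA_eq, hLdef]
        have h1 := log_add_one_le_harmonic K
        have h2 : Real.log (K:ℝ) ≤ Real.log ((K:ℝ)+1) :=
          Real.log_le_log hKpos (by linarith)
        push_cast at h1 ⊢
        linarith
      have hA_up : (∫ z in Set.Ioi (0:ℝ),
          z * ((K : ℝ) * Real.exp (-z) * (1 - Real.exp (-z)) ^ (K - 1))) ≤ 1 + L := by
        rw [hA_eq, hLdef]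
        exact_mod_cast harmonic_le_one_add_log K
      have hA0 : 0 ≤ (∫ z in Set.Ioi (0:ℝ),
          z * ((K : ℝ) * Real.exp (-z) * (1 - Real.exp (-z)) ^ (K - 1))) := by linarith
      have hB0 := B_nonneg K
      have hBl := B_lower K hK2 hb
      have hBu := B_upper K hK2 ha
      have hexp_b : Real.exp (-(L + M)) = ((K:ℝ) * L)⁻¹ := by
        rw [Real.exp_neg, Real.exp_add, hexpL, hexpM]
      have hbern : 1 - 1/L ≤ (1 - Real.exp (-(L + M))) ^ K := by
        have hexp_pos := Real.exp_pos (-(L + M))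
        have hexp_le1 : Real.exp (-(L + M)) ≤ 1 :=
          Real.exp_le_one_iff.mpr (by linarith)
        have h2 : (-2:ℝ) ≤ -Real.exp (-(L + M)) := by linarith
        have hpow := one_add_mul_le_pow h2 K
        have hKe : (K:ℝ) * Real.exp (-(L + M)) = 1/L := by
          rw [hexp_b]
          field_simp
        calc 1 - 1/L = 1 + (K:ℝ) * (-Real.exp (-(L + M))) := by rw [mul_neg, ← hKe]; ring
          _ ≤ (1 + -Real.exp (-(L + M))) ^ K := hpow
          _ = (1 - Real.exp (-(L + M))) ^ K := by rw [← sub_eq_add_neg]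
      have hB_low2 : (L + M)⁻¹ * (1 - 1/L) ≤
          ∫ z in Set.Ioi (0:ℝ),
            z⁻¹ * ((K : ℝ) * Real.exp (-z) * (1 - Real.exp (-z)) ^ (K - 1)) := by
        have := mul_le_mul_of_nonneg_left hbern (inv_nonneg.mpr hb.le)
        linarith [hBl]
      have hlo_nonneg : 0 ≤ (L + M)⁻¹ * (1 - 1/L) := by
        have h1L : 1/L ≤ 1 := by
          rw [div_le_one (by linarith)]; linarith
        have := inv_nonneg.mpr hb.le
        nlinarith
      constructor
      · have hmul := mul_le_mul hA_low hB_low2 hlo_nonneg hA0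
        have hloeq : lo K = L * ((L + M)⁻¹ * (1 - 1/L)) := by
          simp only [hlo_def]
          rw [← hLdef, ← hMdef]
          have hL : L ≠ 0 := by linarith
          have hLM : L + M ≠ 0 := by linarith
          field_simp
        rw [hloeq, hP_def]
        exact hmul
      · -- upper bound
        have hexp_a : Real.exp (-(L - 2*M)) = L^2 / K := by
          rw [show -(L - 2*M) = (M + M) + (-L) from by ring, Real.exp_add, Real.exp_add,
            Real.exp_neg, hexpL, hexpM]
          rw [sq]
          ring
        have hu_a : 0 ≤ 1 - Real.exp (-(L - 2*M)) := u_nonneg ha.le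
        have step1 : 1 - Real.exp (-(L - 2*M)) ≤ Real.exp (-(L^2/K)) := by
          have h := Real.add_one_le_exp (-(L^2/(K:ℝ)))
          rw [hexp_a]
          linarith
        have step2 : (1 - Real.exp (-(L - 2*M))) ^ (K-2) ≤ Real.exp (-(L^2/2)) := by
          calc (1 - Real.exp (-(L - 2*M))) ^ (K-2)
              ≤ (Real.exp (-(L^2/(K:ℝ)))) ^ (K-2) := pow_le_pow_left₀ hu_a step1 _
            _ = Real.exp (((K-2:ℕ):ℝ) * (-(L^2/(K:ℝ)))) := (Real.exp_nat_mul _ _).symm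
            _ ≤ Real.exp (-(L^2/2)) := by
                apply Real.exp_le_exp.mpr
                have hc : ((K-2:ℕ):ℝ) = (K:ℝ) - 2 := by
                  rw [Nat.cast_sub hK2]; norm_num
                rw [hc, mul_neg, neg_le_neg_iff]
                have hK4' : (4:ℝ) ≤ K := by exact_mod_cast hK4
                have key : ((K:ℝ) - 2) * (L^2/(K:ℝ)) - L^2/2 =
                    L^2 * ((K:ℝ) - 4) / (2*(K:ℝ)) := by
                  field_simp
                  ring
                have hrhs : 0 ≤ L^2 * ((K:ℝ) - 4) / (2*(K:ℝ)) :=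
                  div_nonneg (mul_nonneg (sq_nonneg L) (by linarith)) (by positivity)
                linarith
        have heps : (K:ℝ) * (1 - Real.exp (-(L - 2*M))) ^ (K-2) * (L - 2*M)
            ≤ (K:ℝ) * Real.exp (-(L^2/2)) * L := by
          refine mul_le_mul (mul_le_mul_of_nonneg_left step2 hKpos.le) (by linarith) ha.le ?_
          positivity
        have hKexp : (K:ℝ) * Real.exp (-(L^2/2)) * L = L * Real.exp (L - L^2/2) := by
          rw [← hexpL, ← Real.exp_add, show L + -(L^2/2) = L - L^2/2 from by ring]
          ring
        have hB_up2 : (∫ z in Set.Ioi (0:ℝ),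
            z⁻¹ * ((K : ℝ) * Real.exp (-z) * (1 - Real.exp (-z)) ^ (K - 1)))
            ≤ (L - 2*M)⁻¹ + L * Real.exp (L - L^2/2) := by
          rw [← hKexp]
          linarith [hBu, heps]
        have hmul := mul_le_mul hA_up hB_up2 hB0 (by linarith : (0:ℝ) ≤ 1 + L)
        have hupeq : up K = (1 + L) * ((L - 2*M)⁻¹ + L * Real.exp (L - L^2/2)) := by
          simp only [hup_def]
          rw [← hLdef, ← hMdef]
          ring
        rw [hupeq, hP_def]
        exact hmul
    have hP1 : Tendsto P atTop (𝓝 1) :=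
      tendsto_of_tendsto_of_tendsto_of_le_of_le' hlo_lim hup_lim
        (hbound.mono fun K h => h.1) (hbound.mono fun K h => h.2)
    have hlog := (Real.continuousAt_log one_ne_zero).tendsto.comp hP1
    simpa [Function.comp_def, Real.log_one] using hlog
end

section
/- Let α > 1 and let K ≥ 1 be an integer, and let Z have CDF F(z) = exp(−K·z^{−α}) for z > 0, i.e., density f(z) = α·K·z^{−α−1}·exp(−K·z^{−α}) on (0,∞) (the maximum of K i.i.d. standard Fréchet(α) random variables). Then E[log Z] = (log K + γ_em)/α, E[Z⁻¹] = K^{−1/α}·Γ(1 + 1/α), and E[Z] = K^{1/α}·Γ(1 − 1/α); consequently E[log Z] + log(E[Z⁻¹]) = γ_em/α + log Γ(1 + 1/α) and log(E[Z]·E[Z⁻¹]) = log(Γ(1 − 1/α)·Γ(1 + 1/α)), neither of which depends on K. Hence, with Fréchet-distributed user gains, the high-SNR capacity gaps between optimal power and rate adaptation and channel inversion, and between AWGN and channel inversion, do not decrease as the number of users K increases. -/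
open MeasureTheory Filter Topology

section FrechetAux
open Set

private lemma frechet_mellin_pair :
    MellinConvergent (fun t : ℝ => Real.log t • ((Real.exp (-t) : ℝ) : ℂ)) 1 ∧
      HasDerivAt (mellin fun t : ℝ => ((Real.exp (-t) : ℝ) : ℂ))
        (mellin (fun t : ℝ => Real.log t • ((Real.exp (-t) : ℝ) : ℂ)) 1) 1 := by
  refine mellin_hasDerivAt_of_isBigO_rpow (a := 2) (b := 0) ?_ ?_ (by norm_num) ?_ (by norm_num)
  · refine (Continuous.continuousOn ?_).locallyIntegrableOn measurableSet_Ioi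
    exact Complex.continuous_ofReal.comp (Real.continuous_exp.comp continuous_neg)
  · rw [← Asymptotics.isBigO_norm_left]
    simp_rw [Complex.norm_real,
      Asymptotics.isBigO_norm_left]
    simpa only [neg_one_mul] using (isLittleO_exp_neg_mul_rpow_atTop zero_lt_one _).isBigO
  · simp_rw [neg_zero, Real.rpow_zero]
    refine Asymptotics.isBigO_const_of_tendsto (?_ : Tendsto _ _ (𝓝 (1 : ℂ))) one_ne_zero
    rw [(by simp : (1 : ℂ) = Real.exp (-0))]
    exact (Complex.continuous_ofReal.comp
      (Real.continuous_exp.comp continuous_neg)).continuousWithinAt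

private lemma frechet_integrableOn_log_mul_exp_neg :
    IntegrableOn (fun t : ℝ => Real.log t * Real.exp (-t)) (Set.Ioi 0) := by
  have h := frechet_mellin_pair.1
  rw [MellinConvergent] at h
  have h2 : IntegrableOn (fun t : ℝ => ((Real.log t * Real.exp (-t) : ℝ) : ℂ)) (Set.Ioi 0) := by
    refine h.congr_fun (fun t ht => ?_) measurableSet_Ioi
    simp [Complex.real_smul]
  simpa only [RCLike.re_to_complex, Complex.ofReal_re, IntegrableOn] using h2.re

private lemma frechet_integral_log_mul_exp_neg :
    ∫ t in Set.Ioi (0:ℝ), Real.log t * Real.exp (-t) = -Real.eulerMascheroniConstant := by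
  have h2 := frechet_mellin_pair.2
  rw [← Complex.GammaIntegral_eq_mellin] at h2
  have hval : mellin (fun t : ℝ => Real.log t • ((Real.exp (-t) : ℝ) : ℂ)) 1
      = ((∫ t in Set.Ioi (0:ℝ), Real.log t * Real.exp (-t) : ℝ) : ℂ) := by
    rw [mellin]
    calc (∫ t : ℝ in Set.Ioi 0, (t : ℂ) ^ ((1:ℂ) - 1) • Real.log t • ((Real.exp (-t) : ℝ) : ℂ))
        = ∫ t : ℝ in Set.Ioi 0, ((Real.log t * Real.exp (-t) : ℝ) : ℂ) := by
          refine setIntegral_congr_fun measurableSet_Ioi (fun t ht => ?_)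
          simp [Complex.real_smul]
      _ = _ := integral_ofReal
  rw [hval] at h2
  have h3 : HasDerivAt Complex.Gamma
      ((∫ t in Set.Ioi (0:ℝ), Real.log t * Real.exp (-t) : ℝ) : ℂ) 1 := by
    refine h2.congr_of_eventuallyEq ?_
    have hmem : {z : ℂ | 0 < z.re} ∈ 𝓝 (1 : ℂ) := by
      refine (Complex.continuous_re.isOpen_preimage _ isOpen_Ioi).mem_nhds ?_
      simp
    filter_upwards [hmem] with z hz
    exact Complex.Gamma_eq_integral hz
  have h4 : HasDerivAt (fun x : ℝ => Complex.Gamma (x : ℂ))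
      ((∫ t in Set.Ioi (0:ℝ), Real.log t * Real.exp (-t) : ℝ) : ℂ) 1 := by
    exact_mod_cast h3.comp_ofReal
  have h5 : HasDerivAt (fun x : ℝ => ((Real.Gamma x : ℝ) : ℂ))
      ((-Real.eulerMascheroniConstant : ℝ) : ℂ) 1 :=
    Real.hasDerivAt_Gamma_one.ofReal_comp
  have h6 : HasDerivAt (fun x : ℝ => ((Real.Gamma x : ℝ) : ℂ))
      ((∫ t in Set.Ioi (0:ℝ), Real.log t * Real.exp (-t) : ℝ) : ℂ) 1 := by
    refine h4.congr_of_eventuallyEq ?_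
    filter_upwards with x
    rw [Complex.Gamma_ofReal]
  exact_mod_cast h6.unique h5

private lemma frechet_integral_log_mul_exp_neg_mul {c : ℝ} (hc : 0 < c) :
    ∫ t in Set.Ioi (0:ℝ), Real.log t * (c * Real.exp (-c * t)) =
      -Real.log c - Real.eulerMascheroniConstant := by
  have key : ∫ t in Set.Ioi (0:ℝ), (Real.log (c * t) - Real.log c) * Real.exp (-(c * t)) =
      c⁻¹ * ∫ u in Set.Ioi (0:ℝ), (Real.log u - Real.log c) * Real.exp (-u) := by
    have := integral_comp_mul_left_Ioi
      (fun u => (Real.log u - Real.log c) * Real.exp (-u)) 0 hc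
    simpa using this
  have hsplit : ∫ u in Set.Ioi (0:ℝ), (Real.log u - Real.log c) * Real.exp (-u) =
      (∫ u in Set.Ioi (0:ℝ), Real.log u * Real.exp (-u)) -
        Real.log c * ∫ u in Set.Ioi (0:ℝ), Real.exp (-u) := by
    have hexp : IntegrableOn (fun u : ℝ => Real.exp (-u)) (Set.Ioi 0) := by
      simpa using exp_neg_integrableOn_Ioi 0 one_pos
    rw [← integral_const_mul, ← integral_sub frechet_integrableOn_log_mul_exp_neg
      (hexp.const_mul _)]
    refine setIntegral_congr_fun measurableSet_Ioi (fun u hu => ?_)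
    ring
  have h1 : ∫ t in Set.Ioi (0:ℝ), Real.log t * (c * Real.exp (-c * t)) =
      c * ∫ t in Set.Ioi (0:ℝ), (Real.log (c * t) - Real.log c) * Real.exp (-(c * t)) := by
    rw [← integral_const_mul]
    refine setIntegral_congr_fun measurableSet_Ioi (fun t ht => ?_)
    rw [Real.log_mul hc.ne' (ne_of_gt ht)]
    ring_nf
  rw [h1, key, hsplit, frechet_integral_log_mul_exp_neg]
  rw [integral_exp_neg_Ioi_zero]
  field_simp
  ring

private lemma frechet_subst (α : ℝ) (hα : 0 < α) (f : ℝ → ℝ) :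
    ∫ z in Set.Ioi (0:ℝ), α * z ^ (-α - 1) * f (z ^ (-α)) = ∫ t in Set.Ioi (0:ℝ), f t := by
  rw [← integral_comp_rpow_Ioi f (p := -α) (by linarith : (-α) ≠ 0)]
  refine setIntegral_congr_fun measurableSet_Ioi (fun z hz => ?_)
  rw [smul_eq_mul, abs_neg, abs_of_pos hα]

end FrechetAux

/-- **Fréchet user gains: the high-SNR gaps do not depend on the number of users.** Let
`α > 1` and `K ≥ 1`, and let `Z` have density
`f(z) = α·K·z^{−α−1}·exp(−K·z^{−α})` on `(0,∞)` (the maximum of `K` i.i.d. standard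
Fréchet(α) variables, with CDF `exp(−K·z^{−α})`). Then `E[log Z] = (log K + γ_em)/α`,
`E[Z⁻¹] = K^{−1/α}·Γ(1 + 1/α)` and `E[Z] = K^{1/α}·Γ(1 − 1/α)`; consequently the high-SNR
gap between optimal power-and-rate adaptation and channel inversion is
`E[log Z] + log(E[Z⁻¹]) = γ_em/α + log Γ(1 + 1/α)`, and the gap between AWGN and channel
inversion is `log(E[Z]·E[Z⁻¹]) = log(Γ(1 − 1/α)·Γ(1 + 1/α))` — neither depends on `K`. -/
theorem frechet_gaps_independent_of_users (α : ℝ) (hα : 1 < α) (K : ℕ) (hK : 1 ≤ K) :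
    (∫ z in Set.Ioi (0:ℝ),
        Real.log z * (α * (K:ℝ) * z ^ (-α - 1) * Real.exp (-(K:ℝ) * z ^ (-α))) =
      (Real.log (K:ℝ) + Real.eulerMascheroniConstant) / α) ∧
    (∫ z in Set.Ioi (0:ℝ),
        z⁻¹ * (α * (K:ℝ) * z ^ (-α - 1) * Real.exp (-(K:ℝ) * z ^ (-α))) =
      (K:ℝ) ^ (-(1/α)) * Real.Gamma (1 + 1/α)) ∧
    (∫ z in Set.Ioi (0:ℝ),
        z * (α * (K:ℝ) * z ^ (-α - 1) * Real.exp (-(K:ℝ) * z ^ (-α))) =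
      (K:ℝ) ^ (1/α) * Real.Gamma (1 - 1/α)) ∧
    ((∫ z in Set.Ioi (0:ℝ),
        Real.log z * (α * (K:ℝ) * z ^ (-α - 1) * Real.exp (-(K:ℝ) * z ^ (-α)))) +
      Real.log (∫ z in Set.Ioi (0:ℝ),
        z⁻¹ * (α * (K:ℝ) * z ^ (-α - 1) * Real.exp (-(K:ℝ) * z ^ (-α)))) =
      Real.eulerMascheroniConstant / α + Real.log (Real.Gamma (1 + 1/α))) ∧
    (Real.log ((∫ z in Set.Ioi (0:ℝ),
          z * (α * (K:ℝ) * z ^ (-α - 1) * Real.exp (-(K:ℝ) * z ^ (-α)))) *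
        (∫ z in Set.Ioi (0:ℝ),
          z⁻¹ * (α * (K:ℝ) * z ^ (-α - 1) * Real.exp (-(K:ℝ) * z ^ (-α))))) =
      Real.log (Real.Gamma (1 - 1/α) * Real.Gamma (1 + 1/α))) := by
  have hα0 : (0:ℝ) < α := by linarith
  have hK0 : (0:ℝ) < (K:ℝ) := by exact_mod_cast Nat.lt_of_lt_of_le Nat.zero_lt_one hK
  -- generic Gamma-type integral
  have hgen : ∀ q : ℝ, -1 < q →
      ∫ t in Set.Ioi (0:ℝ), t ^ q * ((K:ℝ) * Real.exp (-(K:ℝ) * t)) =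
        (K:ℝ) ^ (-q) * Real.Gamma (q + 1) := by
    intro q hq
    have h := integral_rpow_mul_exp_neg_mul_rpow (p := 1) (q := q) (b := (K:ℝ)) one_pos hq hK0
    rw [show (∫ t in Set.Ioi (0:ℝ), t ^ q * ((K:ℝ) * Real.exp (-(K:ℝ) * t)))
        = (K:ℝ) * ∫ x in Set.Ioi (0:ℝ), x ^ q * Real.exp (-(K:ℝ) * x ^ (1:ℝ)) by
      rw [← integral_const_mul]
      refine setIntegral_congr_fun measurableSet_Ioi fun t ht => ?_
      rw [Real.rpow_one]; ring]
    rw [h]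
    have he : (K:ℝ) * ((K:ℝ) ^ (-(q + 1) / 1) * (1 / 1) * Real.Gamma ((q + 1) / 1))
        = ((K:ℝ) ^ (1:ℝ) * (K:ℝ) ^ (-(q + 1))) * Real.Gamma (q + 1) := by
      rw [div_one, div_one, Real.rpow_one]; ring
    rw [he, ← Real.rpow_add hK0]
    norm_num
  -- the three moment integrals
  have hlog : ∫ z in Set.Ioi (0:ℝ),
      Real.log z * (α * (K:ℝ) * z ^ (-α - 1) * Real.exp (-(K:ℝ) * z ^ (-α))) =
      (Real.log (K:ℝ) + Real.eulerMascheroniConstant) / α := by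
    have hs := frechet_subst α hα0
      (fun t => Real.log (t ^ (-(1/α))) * ((K:ℝ) * Real.exp (-(K:ℝ) * t)))
    rw [show (∫ z in Set.Ioi (0:ℝ),
        Real.log z * (α * (K:ℝ) * z ^ (-α - 1) * Real.exp (-(K:ℝ) * z ^ (-α))))
        = ∫ z in Set.Ioi (0:ℝ), α * z ^ (-α - 1) *
            (Real.log ((z ^ (-α)) ^ (-(1/α))) * ((K:ℝ) * Real.exp (-(K:ℝ) * z ^ (-α)))) by
      refine setIntegral_congr_fun measurableSet_Ioi fun z hz => ?_
      rw [← Real.rpow_mul (le_of_lt hz), show (-α) * (-(1/α)) = 1 by field_simp, Real.rpow_one]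
      ring]
    rw [hs]
    rw [show (∫ t in Set.Ioi (0:ℝ),
        Real.log (t ^ (-(1/α))) * ((K:ℝ) * Real.exp (-(K:ℝ) * t)))
        = (-(1/α)) * ∫ t in Set.Ioi (0:ℝ),
            Real.log t * ((K:ℝ) * Real.exp (-(K:ℝ) * t)) by
      rw [← integral_const_mul]
      refine setIntegral_congr_fun measurableSet_Ioi fun t ht => ?_
      rw [Real.log_rpow ht]; ring]
    rw [frechet_integral_log_mul_exp_neg_mul hK0]
    field_simp
    ring
  have hinv : ∫ z in Set.Ioi (0:ℝ),
      z⁻¹ * (α * (K:ℝ) * z ^ (-α - 1) * Real.exp (-(K:ℝ) * z ^ (-α))) =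
      (K:ℝ) ^ (-(1/α)) * Real.Gamma (1 + 1/α) := by
    have hs := frechet_subst α hα0
      (fun t => t ^ (1/α) * ((K:ℝ) * Real.exp (-(K:ℝ) * t)))
    rw [show (∫ z in Set.Ioi (0:ℝ),
        z⁻¹ * (α * (K:ℝ) * z ^ (-α - 1) * Real.exp (-(K:ℝ) * z ^ (-α))))
        = ∫ z in Set.Ioi (0:ℝ), α * z ^ (-α - 1) *
            ((z ^ (-α)) ^ (1/α) * ((K:ℝ) * Real.exp (-(K:ℝ) * z ^ (-α)))) by
      refine setIntegral_congr_fun measurableSet_Ioi fun z hz => ?_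
      rw [← Real.rpow_mul (le_of_lt hz), show (-α) * (1/α) = -1 by field_simp,
        Real.rpow_neg_one]
      ring]
    rw [hs, hgen (1/α) (lt_trans (by norm_num) (one_div_pos.mpr hα0)), add_comm (1/α) 1]
  have hmean : ∫ z in Set.Ioi (0:ℝ),
      z * (α * (K:ℝ) * z ^ (-α - 1) * Real.exp (-(K:ℝ) * z ^ (-α))) =
      (K:ℝ) ^ (1/α) * Real.Gamma (1 - 1/α) := by
    have hs := frechet_subst α hα0
      (fun t => t ^ (-(1/α)) * ((K:ℝ) * Real.exp (-(K:ℝ) * t)))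
    rw [show (∫ z in Set.Ioi (0:ℝ),
        z * (α * (K:ℝ) * z ^ (-α - 1) * Real.exp (-(K:ℝ) * z ^ (-α))))
        = ∫ z in Set.Ioi (0:ℝ), α * z ^ (-α - 1) *
            ((z ^ (-α)) ^ (-(1/α)) * ((K:ℝ) * Real.exp (-(K:ℝ) * z ^ (-α)))) by
      refine setIntegral_congr_fun measurableSet_Ioi fun z hz => ?_
      rw [← Real.rpow_mul (le_of_lt hz), show (-α) * (-(1/α)) = 1 by field_simp, Real.rpow_one]
      ring]
    have h1α : 1/α < 1 := by
      rw [div_lt_one hα0]; linarith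
    rw [hs, hgen (-(1/α)) (by linarith), neg_neg]
    rw [show -(1/α) + 1 = 1 - 1/α by ring]
  have hΓb : (0:ℝ) < Real.Gamma (1 + 1/α) := Real.Gamma_pos_of_pos (by positivity)
  refine ⟨hlog, hinv, hmean, ?_, ?_⟩
  · rw [hlog, hinv, Real.log_mul (Real.rpow_pos_of_pos hK0 _).ne' hΓb.ne',
      Real.log_rpow hK0]
    field_simp
    ring
  · rw [hinv, hmean]
    rw [show (K:ℝ) ^ (1/α) * Real.Gamma (1 - 1/α) * ((K:ℝ) ^ (-(1/α)) * Real.Gamma (1 + 1/α))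
        = ((K:ℝ) ^ (1/α) * (K:ℝ) ^ (-(1/α))) * (Real.Gamma (1 - 1/α) * Real.Gamma (1 + 1/α)) by
      ring, ← Real.rpow_add hK0]
    norm_num
end
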